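/- Let J̄ = (ε(F_{n-v}))^{-1} Q_{n-v} be the normalized matrix of maximum out forests of a weighted digraph G. Then for all vertices i and j: (1) J̄_{ii} ≥ J̄_{ji}; and (2) if J̄_{ij} > 0 then J̄_{ii} = J̄_{ji}. -/

import Mathlib

open scoped Classical
open Finset

variable {n : ℕ}

/-- The arc relation of a finite arc set. -/
def arcRel (F : Finset (Fin n × Fin n)) : Fin n → Fin n → Prop :=
  fun a b => (a, b) ∈ F

/-- A diverging forest: no directed cycles, and every vertex has in-degree at most 1. -/
def IsDivForest (F : Finset (Fin n × Fin n)) : Prop :=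
  (∀ v, ¬ Relation.TransGen (arcRel F) v v) ∧
  ∀ w z₁ z₂, (z₁, w) ∈ F → (z₂, w) ∈ F → z₁ = z₂

/-- `F` is a spanning diverging forest of the weighted digraph whose arcs are the
pairs of positive weight under `ε`. -/
def IsSpForest (ε : Fin n → Fin n → ℝ) (F : Finset (Fin n × Fin n)) : Prop :=
  (∀ p ∈ F, 0 < ε p.1 p.2) ∧ IsDivForest F

/-- The weight of a forest: the product of its arc weights. -/
noncomputable def fweight (ε : Fin n → Fin n → ℝ) (F : Finset (Fin n × Fin n)) : ℝ :=
  ∏ p ∈ F, ε p.1 p.2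

/-- The weight of a set of forests: the sum of the weights of its members. -/
noncomputable def swt (ε : Fin n → Fin n → ℝ)
    (S : Finset (Finset (Fin n × Fin n))) : ℝ :=
  ∑ F ∈ S, fweight ε F

/-- The set of spanning diverging forests with `k` arcs. -/
noncomputable def forestsK (ε : Fin n → Fin n → ℝ) (k : ℕ) :
    Finset (Finset (Fin n × Fin n)) :=
  Finset.univ.filter (fun F => IsSpForest ε F ∧ F.card = k)

/-- The set of spanning diverging forests with `k` arcs in which vertex `i` belongs to
the tree diverging from `j` (so `j` is a root and `i` is reachable from `j`). -/
noncomputable def forestsKji (ε : Fin n → Fin n → ℝ) (k : ℕ) (j i : Fin n) :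
    Finset (Finset (Fin n × Fin n)) :=
  (forestsK ε k).filter (fun F => (∀ u, (u, j) ∉ F) ∧ Relation.ReflTransGen (arcRel F) j i)

/-- The maximum number of arcs in a spanning diverging forest, equal to `n - v`
where `v` is the forest dimension. -/
noncomputable def maxArcs (ε : Fin n → Fin n → ℝ) : ℕ :=
  (Finset.univ.filter (fun F : Finset (Fin n × Fin n) => IsSpForest ε F)).sup Finset.card

/-- The Kirchhoff matrix of the weighted digraph with weights `ε`. -/
noncomputable def Kirchhoff (ε : Fin n → Fin n → ℝ) : Matrix (Fin n) (Fin n) ℝ :=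
  Matrix.of fun i j =>
    if i = j then ∑ k ∈ Finset.univ.filter (· ≠ i), ε k i else - ε j i

/-- The matrix of maximum out forests: entry `(i, j)` is the total weight of maximum
out forests in which `i` lies in the tree diverging from `j`. -/
noncomputable def Qmax (ε : Fin n → Fin n → ℝ) : Matrix (Fin n) (Fin n) ℝ :=
  Matrix.of fun i j => swt ε (forestsKji ε (maxArcs ε) j i)

/-- The normalized matrix of maximum out forests. -/
noncomputable def Jbar (ε : Fin n → Fin n → ℝ) : Matrix (Fin n) (Fin n) ℝ :=
  (swt ε (forestsK ε (maxArcs ε)))⁻¹ • Qmax ε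


private lemma reach_insert {n : ℕ} {E : Finset (Fin n × Fin n)} {a b : Fin n}
    (hba : ¬ Relation.ReflTransGen (arcRel E) b a) {x y : Fin n}
    (h : Relation.ReflTransGen (arcRel (insert (a, b) E)) x y) :
    Relation.ReflTransGen (arcRel E) x y ∨
      (Relation.ReflTransGen (arcRel E) x a ∧ Relation.ReflTransGen (arcRel E) b y) := by
  induction h with
  | refl => exact Or.inl Relation.ReflTransGen.refl
  | @tail y' y h1 h2 ih =>
    rcases Finset.mem_insert.mp h2 with h2 | h2
    · injection h2 with e1 e2
      subst e1; subst e2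
      rcases ih with h | ⟨h, hb⟩
      · exact Or.inr ⟨h, Relation.ReflTransGen.refl⟩
      · exact absurd hb hba
    · rcases ih with h | ⟨hxa, hby⟩
      · exact Or.inl (h.tail h2)
      · exact Or.inr ⟨hxa, hby.tail h2⟩

private lemma acyclic_insert {n : ℕ} {E : Finset (Fin n × Fin n)} {a b : Fin n}
    (hE : ∀ v, ¬ Relation.TransGen (arcRel E) v v)
    (hba : ¬ Relation.ReflTransGen (arcRel E) b a) :
    ∀ v, ¬ Relation.TransGen (arcRel (insert (a, b) E)) v v := by
  intro v hv
  obtain ⟨w, hvw, hwv⟩ := (Relation.TransGen.tail'_iff).mp hv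
  rcases Finset.mem_insert.mp hwv with h | h
  · injection h with e1 e2
    subst e1; subst e2
    rcases reach_insert hba hvw with h' | ⟨h', -⟩ <;> exact hba h'
  · rcases reach_insert hba hvw with h' | ⟨h', hbw⟩
    · exact hE v (Relation.TransGen.tail' h' h)
    · exact hba ((hbw.tail h).trans h')

private lemma card_le_maxArcs {n : ℕ} (ε : Fin n → Fin n → ℝ) {F : Finset (Fin n × Fin n)}
    (hF : IsSpForest ε F) : F.card ≤ maxArcs ε :=
  Finset.le_sup (f := Finset.card) (Finset.mem_filter.mpr ⟨Finset.mem_univ F, hF⟩)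

private lemma claimD {n : ℕ} (ε : Fin n → Fin n → ℝ) {i a : Fin n}
    (hpath : Relation.ReflTransGen (fun x y => 0 < ε x y) a i) :
    ∀ F : Finset (Fin n × Fin n), IsSpForest ε F → F.card = maxArcs ε →
      (∀ u, (u, i) ∉ F) → Relation.ReflTransGen (arcRel F) i a := by
  induction hpath using Relation.ReflTransGen.head_induction_on with
  | refl => exact fun F _ _ _ => Relation.ReflTransGen.refl
  | @head a c hac hci ih =>
    intro F hF hcard hroot
    by_contra hia
    have hic : Relation.ReflTransGen (arcRel F) i c := ih F hF hcard hroot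
    have hca : ¬ Relation.ReflTransGen (arcRel F) c a := fun h => hia (hic.trans h)
    by_cases hc : c = i
    · subst hc
      have hmem : (a, c) ∉ F := hroot a
      have hsp' : IsSpForest ε (insert (a, c) F) := by
        refine ⟨?_, acyclic_insert hF.2.1 hca, ?_⟩
        · intro p hp
          rcases Finset.mem_insert.mp hp with rfl | hp
          · exact hac
          · exact hF.1 p hp
        · intro w z₁ z₂ h₁ h₂
          rcases Finset.mem_insert.mp h₁ with h₁ | h₁ <;>
            rcases Finset.mem_insert.mp h₂ with h₂ | h₂
          · injection h₁ with e1 _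
            injection h₂ with e3 _
            rw [e1, e3]
          · exfalso
            injection h₁ with e1 e2
            rw [e2] at h₂
            exact hroot z₂ h₂
          · exfalso
            injection h₂ with e3 e4
            rw [e4] at h₁
            exact hroot z₁ h₁
          · exact hF.2.2 w z₁ z₂ h₁ h₂
      have hle := card_le_maxArcs ε hsp'
      rw [Finset.card_insert_of_notMem hmem, hcard] at hle
      omega
    · obtain ⟨p, hip, hpc⟩ : ∃ p, Relation.ReflTransGen (arcRel F) i p ∧ (p, c) ∈ F := by
        rcases hic.cases_tail with h | ⟨p, h1, h2⟩
        · exact absurd h hc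
        · exact ⟨p, h1, h2⟩
      have hap : a ≠ p := fun h => hia (h ▸ hip)
      have habF : (a, c) ∉ F := fun h => hap (hF.2.2 c a p h hpc)
      have hEsub : F.erase (p, c) ⊆ F := Finset.erase_subset _ _
      have hEacyc : ∀ v, ¬ Relation.TransGen (arcRel (F.erase (p, c))) v v := fun v hv =>
        hF.2.1 v (Relation.TransGen.mono (fun x y h => hEsub h) _ _ hv)
      have hbaE : ¬ Relation.ReflTransGen (arcRel (F.erase (p, c))) c a := fun h =>
        hca (Relation.ReflTransGen.mono (fun x y h' => hEsub h') _ _ h)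
      have habE : (a, c) ∉ F.erase (p, c) := fun h => habF (hEsub h)
      have hsp' : IsSpForest ε (insert (a, c) (F.erase (p, c))) := by
        refine ⟨?_, acyclic_insert hEacyc hbaE, ?_⟩
        · intro q hq
          rcases Finset.mem_insert.mp hq with rfl | hq
          · exact hac
          · exact hF.1 q (hEsub hq)
        · intro w z₁ z₂ h₁ h₂
          rcases Finset.mem_insert.mp h₁ with h₁ | h₁ <;>
            rcases Finset.mem_insert.mp h₂ with h₂ | h₂
          · injection h₁ with e1 _
            injection h₂ with e3 _
            rw [e1, e3]
          · exfalso
            injection h₁ with e1 e2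
            rw [e2] at h₂
            have hz : z₂ = p := hF.2.2 c z₂ p (hEsub h₂) hpc
            subst hz
            exact Finset.notMem_erase _ _ h₂
          · exfalso
            injection h₂ with e3 e4
            rw [e4] at h₁
            have hz : z₁ = p := hF.2.2 c z₁ p (hEsub h₁) hpc
            subst hz
            exact Finset.notMem_erase _ _ h₁
          · exact hF.2.2 w z₁ z₂ (hEsub h₁) (hEsub h₂)
      have hcard' : (insert (a, c) (F.erase (p, c))).card = maxArcs ε := by
        rw [Finset.card_insert_of_notMem habE, Finset.card_erase_of_mem hpc]
        have h1 : 0 < F.card := Finset.card_pos.mpr ⟨(p, c), hpc⟩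
        omega
      have hroot' : ∀ u, (u, i) ∉ insert (a, c) (F.erase (p, c)) := by
        intro u hu
        rcases Finset.mem_insert.mp hu with h | h
        · injection h with _ e2
          exact hc e2.symm
        · exact hroot u (hEsub h)
      have hic' := ih _ hsp' hcard' hroot'
      obtain ⟨q, hiq, hqc⟩ :
          ∃ q, Relation.ReflTransGen (arcRel (insert (a, c) (F.erase (p, c)))) i q ∧
            (q, c) ∈ insert (a, c) (F.erase (p, c)) := by
        rcases hic'.cases_tail with h | h
        · exact absurd h hc
        · exact h
      have hq : q = a := by
        rcases Finset.mem_insert.mp hqc with h | h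
        · injection h
        · exfalso
          have hz : q = p := hF.2.2 c q p (hEsub h) hpc
          subst hz
          exact Finset.notMem_erase _ _ h
      subst hq
      rcases reach_insert hbaE hiq with h | ⟨h, -⟩ <;>
        exact hia (Relation.ReflTransGen.mono (fun x y h' => hEsub h') _ _ h)

/-- Diagonal comparison for the normalized matrix of maximum out forests. -/
theorem stmt15 (ε : Fin n → Fin n → ℝ) (hnonneg : ∀ i j, 0 ≤ ε i j)
    (hloop : ∀ i, ε i i = 0) (i j : Fin n) :
    Jbar ε j i ≤ Jbar ε i i ∧ (0 < Jbar ε i j → Jbar ε i i = Jbar ε j i) := by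
  have hw : ∀ F : Finset (Fin n × Fin n), 0 ≤ fweight ε F := fun F =>
    Finset.prod_nonneg fun p _ => hnonneg p.1 p.2
  have hcinv : (0 : ℝ) ≤ (swt ε (forestsK ε (maxArcs ε)))⁻¹ :=
    inv_nonneg.mpr (Finset.sum_nonneg fun F _ => hw F)
  have hsub : ∀ b : Fin n, forestsKji ε (maxArcs ε) i b ⊆ forestsKji ε (maxArcs ε) i i := by
    intro b F hF
    rw [forestsKji, Finset.mem_filter] at hF ⊢
    exact ⟨hF.1, hF.2.1, Relation.ReflTransGen.refl⟩
  constructor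
  · simp only [Jbar, Qmax, Matrix.smul_apply, Matrix.of_apply, smul_eq_mul, swt]
    exact mul_le_mul_of_nonneg_left
      (Finset.sum_le_sum_of_subset_of_nonneg (hsub j) (fun F _ _ => hw F)) hcinv
  · intro hpos
    simp only [Jbar, Qmax, Matrix.smul_apply, Matrix.of_apply, smul_eq_mul] at hpos ⊢
    obtain ⟨F₀, hF₀⟩ : (forestsKji ε (maxArcs ε) j i).Nonempty := by
      by_contra h
      rw [Finset.not_nonempty_iff_eq_empty] at h
      rw [h] at hpos
      simp [swt] at hpos
    rw [forestsKji, Finset.mem_filter, forestsK, Finset.mem_filter] at hF₀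
    obtain ⟨⟨-, hsp₀, -⟩, -, hreach₀⟩ := hF₀
    have hpath : Relation.ReflTransGen (fun x y => 0 < ε x y) j i :=
      Relation.ReflTransGen.mono (fun x y h => hsp₀.1 (x, y) h) _ _ hreach₀
    have heq : forestsKji ε (maxArcs ε) i i = forestsKji ε (maxArcs ε) i j := by
      apply Finset.Subset.antisymm _ (hsub j)
      intro F hF
      rw [forestsKji, Finset.mem_filter, forestsK, Finset.mem_filter] at hF ⊢
      obtain ⟨⟨hu, hsp, hcard⟩, hroot, -⟩ := hF
      exact ⟨⟨hu, hsp, hcard⟩, hroot, claimD ε hpath F hsp hcard hroot⟩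
    rw [heq]
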